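/- arXiv:1709.02938 — 4 statements merged into one kernel-verified Lean document; each statement's English description precedes it below -/
import Mathlib

section
/- For any n ≥ 2 and digits q_1, …, q_n ∈ {0,1,2,3}, the modified Hilbert map satisfies (T_{q_1} ∘ ⋯ ∘ T_{q_{n−1}})(F_{q_n}) = 2^{−(n−1)} · H_{q_1}·H_{q_2}···H_{q_{n−1}} · F_{q_n} + Σ_{j=1}^{n−1} 2^{−j} · H_0^{e_{0j}} · H_3^{e_{3j}} · h_{q_j}, where e_{0j} = (number of indices i < j with q_i = 0) mod 2 and e_{3j} = (number of indices i < j with q_i = 3) mod 2. -/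
open Matrix

noncomputable section

abbrev E2 := EuclideanSpace ℝ (Fin 2)

def toE (v : Fin 2 → ℝ) : E2 := WithLp.toLp 2 v

def pt (x y : ℝ) : E2 := WithLp.toLp 2 ![x, y]

def Hm : Fin 4 → Matrix (Fin 2) (Fin 2) ℝ
  | 0 => !![0, 1; 1, 0]
  | 1 => 1
  | 2 => 1
  | 3 => !![0, -1; -1, 0]

def hv : Fin 4 → E2
  | 0 => pt 0 0
  | 1 => pt 0 1
  | 2 => pt 1 1
  | 3 => pt 2 1

def T (i : Fin 4) (v : E2) : E2 :=
  (1 / 2 : ℝ) • toE ((Hm i).mulVec v) + (1 / 2 : ℝ) • hv i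

def Q : Set E2 := {p | p 0 ∈ Set.Icc (0:ℝ) 1 ∧ p 1 ∈ Set.Icc (0:ℝ) 1}

def Fv : Fin 4 → E2
  | 0 => pt (1/4) (1/4)
  | 1 => pt (1/4) (3/4)
  | 2 => pt (3/4) (3/4)
  | 3 => pt (3/4) (1/4)

/-- Composition T_{q 0} ∘ ⋯ ∘ T_{q (n-1)}. -/
def compT : (n : ℕ) → (Fin n → Fin 4) → E2 → E2
  | 0, _ => id
  | n + 1, q => T (q 0) ∘ compT n (fun j => q j.succ)

/-- Node from m+1 digits q 0, …, q m : (T_{q 0} ∘ ⋯ ∘ T_{q (m-1)}) (F_{q m}). -/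
def nodeAux : ℕ → (ℕ → Fin 4) → E2
  | 0, q => Fv (q 0)
  | m + 1, q => T (q 0) (nodeAux m (fun j => q (j + 1)))

/-- j-th base-4 digit of k, for the n-digit expansion (j = 0 is the leading digit). -/
def hdigit (n k j : ℕ) : Fin 4 := ⟨k / 4 ^ (n - 1 - j) % 4, Nat.mod_lt _ (by norm_num)⟩

/-- The k-th node of the n-th order Hilbert curve. -/
def node (n k : ℕ) : E2 := nodeAux (n - 1) (hdigit n k)


-- auxiliary defs
def toP (v : E2) : Fin 2 → ℝ := v

lemma T_pi (i : Fin 4) (v : E2) :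
    (T i v : Fin 2 → ℝ) = (((1 / 2 : ℝ) • (Hm i).mulVec v + (1 / 2 : ℝ) • toP (hv i) : Fin 2 → ℝ)) := rfl

lemma Hm0_sq : Hm 0 * Hm 0 = 1 := by
  show !![(0:ℝ),1;1,0] * !![(0:ℝ),1;1,0] = 1
  norm_num [Matrix.mul_fin_two]; rw [Matrix.one_fin_two]

lemma Hm3_sq : Hm 3 * Hm 3 = 1 := by
  show !![(0:ℝ),-1;-1,0] * !![(0:ℝ),-1;-1,0] = 1
  norm_num [Matrix.mul_fin_two]; rw [Matrix.one_fin_two]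

lemma comm03 : Commute (Hm 0) (Hm 3) := by
  show !![(0:ℝ),1;1,0] * !![(0:ℝ),-1;-1,0] = !![(0:ℝ),-1;-1,0] * !![(0:ℝ),1;1,0]
  norm_num [Matrix.mul_fin_two]

lemma pow_mod_two (M : Matrix (Fin 2) (Fin 2) ℝ) (h : M * M = 1) (c : ℕ) :
    M ^ c = M ^ (c % 2) := by
  conv_lhs => rw [← Nat.div_add_mod c 2]
  rw [pow_add, pow_mul, pow_two, h, one_pow, one_mul]

lemma prodL (q : ℕ → Fin 4) : ∀ k : ℕ,
    (List.ofFn fun i : Fin k => Hm (q i)).prod =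
      Hm 0 ^ (((Finset.range k).filter fun i => q i = 0).card) *
      Hm 3 ^ (((Finset.range k).filter fun i => q i = 3).card) := by
  intro k
  induction k with
  | zero => simp
  | succ k ih =>
    rw [List.ofFn_succ', List.prod_concat]
    simp only [Fin.coe_castSucc, Fin.val_last]
    rw [ih, Finset.range_add_one, Finset.filter_insert, Finset.filter_insert]
    have hnm : k ∉ Finset.range k := Finset.notMem_range_self
    have h4 : q k = 0 ∨ q k = 1 ∨ q k = 2 ∨ q k = 3 := by
      rcases q k with ⟨v, hv⟩
      interval_cases v <;> simp [Fin.ext_iff]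
    rcases h4 with h | h | h | h <;> rw [h]
    · rw [mul_assoc, ((comm03.symm).pow_left _).eq, ← mul_assoc, ← pow_succ]
      simp [Finset.card_insert_of_notMem hnm]
    · simp only [if_neg (by decide : ¬ (1:Fin 4) = 0), if_neg (by decide : ¬ (1:Fin 4) = 3)]
      show _ * (1 : Matrix (Fin 2) (Fin 2) ℝ) = _
      rw [mul_one]
    · simp only [if_neg (by decide : ¬ (2:Fin 4) = 0), if_neg (by decide : ¬ (2:Fin 4) = 3)]
      show _ * (1 : Matrix (Fin 2) (Fin 2) ℝ) = _
      rw [mul_one]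
    · rw [mul_assoc, ← pow_succ]
      simp [Finset.card_insert_of_notMem hnm]


lemma card_bridge (m : ℕ) (j : Fin m) (q : ℕ → Fin 4) (c : Fin 4) :
    ((Finset.range (j:ℕ)).filter fun i => q i = c).card =
      (Finset.univ.filter fun i : Fin m => i < j ∧ q i.val = c).card := by
  rw [← Finset.card_map Fin.valEmbedding]
  congr 1
  ext a
  simp only [Finset.mem_map, Finset.mem_filter, Finset.mem_univ, true_and,
    Fin.valEmbedding_apply, Finset.mem_range, Fin.lt_def]
  constructor
  · rintro ⟨ha, hP⟩
    exact ⟨⟨a, lt_trans ha j.isLt⟩, ⟨ha, hP⟩, rfl⟩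
  · rintro ⟨i, ⟨hij, hP⟩, rfl⟩
    exact ⟨hij, hP⟩

lemma prefix_eq (m : ℕ) (q : ℕ → Fin 4) (j : Fin m) :
    (List.ofFn fun i : Fin (j:ℕ) => Hm (q i)).prod =
      Hm 0 ^ ((Finset.univ.filter fun i : Fin m => i < j ∧ q i.val = 0).card % 2) *
      Hm 3 ^ ((Finset.univ.filter fun i : Fin m => i < j ∧ q i.val = 3).card % 2) := by
  rw [prodL, card_bridge m j q 0, card_bridge m j q 3,
    pow_mod_two _ Hm0_sq, pow_mod_two _ Hm3_sq]


lemma mulVec_sum {ι : Type} (M : Matrix (Fin 2) (Fin 2) ℝ) (s : Finset ι) (f : ι → Fin 2 → ℝ) :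
    M.mulVec (∑ i ∈ s, f i) = ∑ i ∈ s, M.mulVec (f i) :=
  map_sum (Matrix.mulVecLin M) f s

lemma mainPi : ∀ (m : ℕ) (q : ℕ → Fin 4),
    compT m (fun j => q j) (Fv (q m)) =
      ((((1:ℝ) / 2 ^ m) • ((List.ofFn fun j : Fin m => Hm (q j)).prod.mulVec (toP (Fv (q m)))) +
        ∑ j : Fin m, ((1:ℝ) / 2 ^ ((j:ℕ) + 1)) •
          ((List.ofFn fun i : Fin (j:ℕ) => Hm (q i)).prod.mulVec (toP (hv (q j)))) : Fin 2 → ℝ))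
  | 0, q => by
    show toP (Fv (q 0)) = _
    simp [toP, Matrix.one_mulVec]
  | m + 1, q => by
    have ih := mainPi m (fun i => q (i + 1))
    have e1 : compT (m + 1) (fun j : Fin (m + 1) => q j) (Fv (q (m + 1))) =
        T (q 0) (compT m (fun j : Fin m => q (j + 1)) (Fv (q (m + 1)))) := by
      simp only [compT, Function.comp_apply, Fin.val_succ, Fin.val_zero]
    rw [e1, T_pi, ih]
    rw [Fin.sum_univ_succ]
    simp only [Fin.val_zero, Fin.val_succ, List.ofFn_zero, List.prod_nil, Matrix.one_mulVec,
      pow_zero, pow_one, List.ofFn_succ, List.prod_cons, Matrix.mulVec_add, Matrix.mulVec_smul,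
      mulVec_sum, smul_add, Finset.smul_sum, smul_smul, ← Matrix.mulVec_mulVec]
    have c1 : (1:ℝ)/2 * (1/2^m) = 1/2^(m+1) := by ring
    have c2 : ∀ k:ℕ, (1:ℝ)/2 * (1/2^(k+1)) = 1/2^(k+1+1) := fun k => by ring
    simp only [c1, c2, zero_add, pow_one]
    abel


/-- closed form for the modified Hilbert map:
(T_{q_1}∘⋯∘T_{q_{n−1}})(F_{q_n}) = 2^{−(n−1)}·H_{q_1}⋯H_{q_{n−1}}·F_{q_n}
+ Σ_{j=1}^{n−1} 2^{−j}·H_0^{e_{0j}}·H_3^{e_{3j}}·h_{q_j}. -/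
theorem modified_hilbert_map_formula (n : ℕ) (hn : 2 ≤ n) (q : Fin n → Fin 4) :
    compT (n - 1) (fun j => q (Fin.castLE (by omega) j)) (Fv (q ⟨n - 1, by omega⟩)) =
      ((1:ℝ) / 2 ^ (n - 1)) •
        toE (((List.ofFn fun j : Fin (n - 1) => Hm (q (Fin.castLE (by omega) j))).prod).mulVec
          (Fv (q ⟨n - 1, by omega⟩))) +
      ∑ j : Fin (n - 1), ((1:ℝ) / 2 ^ ((j : ℕ) + 1)) •
        toE ((Hm 0 ^ ((Finset.univ.filter fun i : Fin (n - 1) =>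
                i < j ∧ q (Fin.castLE (by omega) i) = 0).card % 2) *
              Hm 3 ^ ((Finset.univ.filter fun i : Fin (n - 1) =>
                i < j ∧ q (Fin.castLE (by omega) i) = 3).card % 2)).mulVec
              (hv (q (Fin.castLE (by omega) j)))) := by
  set q' : ℕ → Fin 4 := fun i => if h : i < n then q ⟨i, h⟩ else q ⟨n - 1, by omega⟩ with hq'def
  have hq : ∀ j : Fin (n - 1), q (Fin.castLE (by omega : n - 1 ≤ n) j) = q' ↑j := by
    intro j
    rw [hq'def]
    simp only
    rw [dif_pos (by omega : (j : ℕ) < n)]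
    rfl
  have hlast : q ⟨n - 1, by omega⟩ = q' (n - 1) := by
    rw [hq'def]
    simp only
    rw [dif_pos (by omega : n - 1 < n)]
  simp only [hq, hlast, ← prefix_eq (n - 1) q']
  apply WithLp.ofLp_injective 2
  rw [WithLp.ofLp_add, WithLp.ofLp_smul, WithLp.ofLp_sum]
  simp only [WithLp.ofLp_smul, toE, WithLp.ofLp_toLp]
  exact mainPi (n - 1) q'


end
end

section
/- Each node of the n-th order Hilbert curve lies in the interior of the first-level quadrant determined by its leading base-4 digit: for every n ≥ 1 and 0 ≤ k < 4^n, node_n(k) lies in the interior of T_{q_1}(Q), where q_1 = ⌊k / 4^{n−1}⌋. Consequently (Lemma 1 of the paper), two consecutive nodes node_n(k) and node_n(k+1) lie in distinct quadrant images T_a(Q), T_b(Q) with a ≠ b exactly when k + 1 is a multiple of 4^{n−1}, i.e. exactly when k has base-4 digits (q, 3, 3, …, 3) and k+1 has digits (q+1, 0, 0, …, 0) for some q ∈ {0,1,2}. -/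
open Matrix

noncomputable section

/-! ### Auxiliary lemmas -/

lemma pt_zero (x y : ℝ) : pt x y 0 = x := rfl
lemma pt_one (x y : ℝ) : pt x y 1 = y := rfl

lemma T0_eq (v : E2) : T 0 v = pt (v 1 / 2) (v 0 / 2) := by
  ext j
  fin_cases j <;>
  simp [T, toE, pt, Hm, hv, Matrix.mulVec, dotProduct, Fin.sum_univ_two] <;> ring
lemma T1_eq (v : E2) : T 1 v = pt (v 0 / 2) (v 1 / 2 + 1/2) := by
  ext j
  fin_cases j <;>
  simp [T, toE, pt, Hm, hv, Matrix.mulVec, dotProduct, Fin.sum_univ_two] <;> ring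
lemma T2_eq (v : E2) : T 2 v = pt (v 0 / 2 + 1/2) (v 1 / 2 + 1/2) := by
  ext j
  fin_cases j <;>
  simp [T, toE, pt, Hm, hv, Matrix.mulVec, dotProduct, Fin.sum_univ_two] <;> ring
lemma T3_eq (v : E2) : T 3 v = pt (1 - v 1 / 2) (1/2 - v 0 / 2) := by
  ext j
  fin_cases j <;>
  simp [T, toE, pt, Hm, hv, Matrix.mulVec, dotProduct, Fin.sum_univ_two] <;> ring

def openQ : Set E2 := {p | p 0 ∈ Set.Ioo (0:ℝ) 1 ∧ p 1 ∈ Set.Ioo (0:ℝ) 1}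

def Sq : Fin 4 → Set E2
  | 0 => {p | p 0 ∈ Set.Ioo (0:ℝ) (1/2) ∧ p 1 ∈ Set.Ioo (0:ℝ) (1/2)}
  | 1 => {p | p 0 ∈ Set.Ioo (0:ℝ) (1/2) ∧ p 1 ∈ Set.Ioo (1/2:ℝ) 1}
  | 2 => {p | p 0 ∈ Set.Ioo (1/2:ℝ) 1 ∧ p 1 ∈ Set.Ioo (1/2:ℝ) 1}
  | 3 => {p | p 0 ∈ Set.Ioo (1/2:ℝ) 1 ∧ p 1 ∈ Set.Ioo (0:ℝ) (1/2)}

lemma isOpen_band (a b c d : ℝ) :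
    IsOpen {p : E2 | p 0 ∈ Set.Ioo a b ∧ p 1 ∈ Set.Ioo c d} :=
  (isOpen_Ioo.preimage (EuclideanSpace.proj (0:Fin 2)).continuous).inter
    (isOpen_Ioo.preimage (EuclideanSpace.proj (1:Fin 2)).continuous)

lemma isOpen_Sq (i : Fin 4) : IsOpen (Sq i) := by
  fin_cases i <;> exact isOpen_band _ _ _ _

lemma Sq_subset_openQ (i : Fin 4) : Sq i ⊆ openQ := by
  fin_cases i <;> rintro p ⟨⟨h1, h2⟩, h3, h4⟩ <;>
    exact ⟨⟨by linarith, by linarith⟩, by linarith, by linarith⟩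

lemma T_mem_Sq (i : Fin 4) (v : E2) (hv : v ∈ openQ) : T i v ∈ Sq i := by
  obtain ⟨⟨h1, h2⟩, h3, h4⟩ := hv
  fin_cases i
  · show T 0 v ∈ Sq 0
    rw [T0_eq]; exact ⟨⟨by rw [pt_zero]; linarith, by rw [pt_zero]; linarith⟩,
      by rw [pt_one]; linarith, by rw [pt_one]; linarith⟩
  · show T 1 v ∈ Sq 1
    rw [T1_eq]; exact ⟨⟨by rw [pt_zero]; linarith, by rw [pt_zero]; linarith⟩,
      by rw [pt_one]; linarith, by rw [pt_one]; linarith⟩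
  · show T 2 v ∈ Sq 2
    rw [T2_eq]; exact ⟨⟨by rw [pt_zero]; linarith, by rw [pt_zero]; linarith⟩,
      by rw [pt_one]; linarith, by rw [pt_one]; linarith⟩
  · show T 3 v ∈ Sq 3
    rw [T3_eq]; exact ⟨⟨by rw [pt_zero]; linarith, by rw [pt_zero]; linarith⟩,
      by rw [pt_one]; linarith, by rw [pt_one]; linarith⟩

lemma Fv_mem_Sq (i : Fin 4) : Fv i ∈ Sq i := by
  fin_cases i
  · show Fv 0 ∈ Sq 0
    exact ⟨⟨by norm_num [Fv, pt_zero], by norm_num [Fv, pt_zero]⟩,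
      by norm_num [Fv, pt_one], by norm_num [Fv, pt_one]⟩
  · show Fv 1 ∈ Sq 1
    exact ⟨⟨by norm_num [Fv, pt_zero], by norm_num [Fv, pt_zero]⟩,
      by norm_num [Fv, pt_one], by norm_num [Fv, pt_one]⟩
  · show Fv 2 ∈ Sq 2
    exact ⟨⟨by norm_num [Fv, pt_zero], by norm_num [Fv, pt_zero]⟩,
      by norm_num [Fv, pt_one], by norm_num [Fv, pt_one]⟩
  · show Fv 3 ∈ Sq 3
    exact ⟨⟨by norm_num [Fv, pt_zero], by norm_num [Fv, pt_zero]⟩,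
      by norm_num [Fv, pt_one], by norm_num [Fv, pt_one]⟩

lemma nodeAux_mem (m : ℕ) : ∀ q : ℕ → Fin 4, nodeAux m q ∈ Sq (q 0) := by
  induction m with
  | zero => intro q; exact Fv_mem_Sq _
  | succ m ih => intro q; exact T_mem_Sq _ _ (Sq_subset_openQ _ (ih _))

lemma Sq_subset_image (i : Fin 4) : Sq i ⊆ T i '' Q := by
  fin_cases i <;> rintro p ⟨⟨h1, h2⟩, h3, h4⟩
  on_goal 1 => show _ ∈ T 0 '' Q
  on_goal 2 => show _ ∈ T 1 '' Q
  on_goal 3 => show _ ∈ T 2 '' Q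
  on_goal 4 => show _ ∈ T 3 '' Q
  · refine ⟨pt (2 * p 1) (2 * p 0),
      ⟨⟨by rw [pt_zero]; linarith, by rw [pt_zero]; linarith⟩,
        ⟨by rw [pt_one]; linarith, by rw [pt_one]; linarith⟩⟩, ?_⟩
    rw [T0_eq]; ext j; fin_cases j <;> simp [pt] <;> ring
  · refine ⟨pt (2 * p 0) (2 * p 1 - 1),
      ⟨⟨by rw [pt_zero]; linarith, by rw [pt_zero]; linarith⟩,
        ⟨by rw [pt_one]; linarith, by rw [pt_one]; linarith⟩⟩, ?_⟩
    rw [T1_eq]; ext j; fin_cases j <;> simp [pt] <;> ring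
  · refine ⟨pt (2 * p 0 - 1) (2 * p 1 - 1),
      ⟨⟨by rw [pt_zero]; linarith, by rw [pt_zero]; linarith⟩,
        ⟨by rw [pt_one]; linarith, by rw [pt_one]; linarith⟩⟩, ?_⟩
    rw [T2_eq]; ext j; fin_cases j <;> simp [pt] <;> ring
  · refine ⟨pt (1 - 2 * p 1) (2 - 2 * p 0),
      ⟨⟨by rw [pt_zero]; linarith, by rw [pt_zero]; linarith⟩,
        ⟨by rw [pt_one]; linarith, by rw [pt_one]; linarith⟩⟩, ?_⟩
    rw [T3_eq]; ext j; fin_cases j <;> simp [pt] <;> ring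

/-! ### Arithmetic lemmas -/

lemma hdv (n k j : ℕ) : (hdigit n k j : ℕ) = k / 4 ^ (n - 1 - j) % 4 := rfl

lemma lead_eq (n k : ℕ) (hk : k < 4 ^ n) :
    (hdigit n k 0 : ℕ) = k / 4 ^ (n - 1) := by
  have h4 : (0:ℕ) < 4 ^ (n - 1) := pow_pos (by norm_num) _
  have hpow : 4 ^ n ≤ 4 * 4 ^ (n - 1) := by
    rw [← pow_succ']
    exact Nat.pow_le_pow_right (by norm_num) (by omega)
  have hlt : k / 4 ^ (n - 1) < 4 := (Nat.div_lt_iff_lt_mul h4).mpr (lt_of_lt_of_le hk hpow)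
  rw [hdv]
  simp [Nat.mod_eq_of_lt hlt]

lemma claim1 (n k : ℕ) (hk : k < 4 ^ n) (hk1 : k + 1 < 4 ^ n) :
    (hdigit n k 0 ≠ hdigit n (k + 1) 0) ↔ 4 ^ (n - 1) ∣ (k + 1) := by
  have e1 := lead_eq n k hk
  have e2 := lead_eq n (k + 1) hk1
  have hs := Nat.succ_div (a := k) (b := 4 ^ (n - 1))
  rw [Ne, Fin.ext_iff, e1, e2, hs]
  by_cases hd : 4 ^ (n - 1) ∣ (k + 1) <;> simp [hd]

lemma divHelper (a b : ℕ) (ha : 1 ≤ a) (hb : 1 ≤ b) : (a * b - 1) / b = a - 1 := by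
  have e : (a - 1) * b = a * b - b := by rw [Nat.sub_mul, one_mul]
  have hab : b ≤ a * b := Nat.le_mul_of_pos_left b ha
  have e2 : a * b - 1 = (b - 1) + (a - 1) * b := by omega
  rw [e2, Nat.add_mul_div_right _ _ (by omega : 0 < b), Nat.div_eq_of_lt (by omega), zero_add]

lemma claim2_fwd (n k : ℕ) (hn : 1 ≤ n) (hk1 : k + 1 < 4 ^ n) (hd : 4 ^ (n - 1) ∣ (k + 1)) :
    ∃ q : ℕ, q ≤ 2 ∧
      (∀ j : ℕ, j < n → (hdigit n k j : ℕ) = if j = 0 then q else 3) ∧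
      (∀ j : ℕ, j < n → (hdigit n (k + 1) j : ℕ) = if j = 0 then q + 1 else 0) := by
  obtain ⟨c, hc⟩ := hd
  have hp : (0:ℕ) < 4 ^ (n - 1) := pow_pos (by norm_num) _
  have hc1 : 1 ≤ c := by
    rcases Nat.eq_zero_or_pos c with h | h
    · subst h; omega
    · exact h
  have hc3 : c ≤ 3 := by
    by_contra h
    have : 4 ^ (n - 1) * 4 ≤ 4 ^ (n - 1) * c := Nat.mul_le_mul_left _ (by omega)
    have hpow : 4 ^ n ≤ 4 ^ (n - 1) * 4 := by
      rw [← pow_succ]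
      exact Nat.pow_le_pow_right (by norm_num) (by omega)
    omega
  refine ⟨c - 1, by omega, ?_, ?_⟩
  · intro j hj
    have hsplit : (4:ℕ) ^ (n - 1) = 4 ^ j * 4 ^ (n - 1 - j) := by
      rw [← pow_add]; congr 1; omega
    have hposj : (0:ℕ) < 4 ^ j := pow_pos (by norm_num) _
    have hposm : (0:ℕ) < 4 ^ (n - 1 - j) := pow_pos (by norm_num) _
    have hmc : 4 ^ (n - 1) * c = (c * 4 ^ j) * 4 ^ (n - 1 - j) := by rw [hsplit]; ring
    have hk_eq : k = (c * 4 ^ j) * 4 ^ (n - 1 - j) - 1 := by omega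
    have hcj : 1 ≤ c * 4 ^ j := Nat.one_le_iff_ne_zero.mpr (by positivity)
    have hdiv : k / 4 ^ (n - 1 - j) = c * 4 ^ j - 1 := by
      rw [hk_eq]; exact divHelper _ _ hcj hposm
    rw [hdv, hdiv]
    by_cases hj0 : j = 0
    · subst hj0; simp; omega
    · rw [if_neg hj0]
      obtain ⟨j', rfl⟩ : ∃ j', j = j' + 1 := ⟨j - 1, by omega⟩
      rw [show c * 4 ^ (j' + 1) = 4 * (c * 4 ^ j') by ring]
      have h1 : 1 ≤ c * 4 ^ j' := Nat.one_le_iff_ne_zero.mpr (by positivity)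
      omega
  · intro j hj
    have hsplit : (4:ℕ) ^ (n - 1) = 4 ^ j * 4 ^ (n - 1 - j) := by
      rw [← pow_add]; congr 1; omega
    have hposm : (0:ℕ) < 4 ^ (n - 1 - j) := pow_pos (by norm_num) _
    have hdiv : (k + 1) / 4 ^ (n - 1 - j) = c * 4 ^ j := by
      rw [hc, hsplit, show 4 ^ j * 4 ^ (n - 1 - j) * c = (c * 4 ^ j) * 4 ^ (n - 1 - j) by ring]
      exact Nat.mul_div_cancel _ hposm
    rw [hdv, hdiv]
    by_cases hj0 : j = 0
    · subst hj0; simp; omega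
    · rw [if_neg hj0]
      obtain ⟨j', rfl⟩ : ∃ j', j = j' + 1 := ⟨j - 1, by omega⟩
      rw [show c * 4 ^ (j' + 1) = 4 * (c * 4 ^ j') by ring]
      omega

lemma claim2_bwd (n k q : ℕ) (hn : 1 ≤ n)
    (h2 : ∀ j : ℕ, j < n → (hdigit n (k + 1) j : ℕ) = if j = 0 then q + 1 else 0) :
    4 ^ (n - 1) ∣ (k + 1) := by
  suffices h : ∀ m, m ≤ n - 1 → 4 ^ m ∣ (k + 1) from h _ le_rfl
  intro m
  induction m with
  | zero => intro _; simp
  | succ m ih =>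
    intro hm
    obtain ⟨t, ht⟩ := ih (by omega)
    have hj := h2 (n - 1 - m) (by omega)
    rw [hdv, show n - 1 - (n - 1 - m) = m by omega, if_neg (by omega : ¬ n - 1 - m = 0)] at hj
    have hposm : (0:ℕ) < 4 ^ m := pow_pos (by norm_num) _
    rw [ht, Nat.mul_div_cancel_left _ hposm] at hj
    obtain ⟨s, hs⟩ : 4 ∣ t := Nat.dvd_of_mod_eq_zero hj
    exact ⟨s, by rw [ht, hs, pow_succ]; ring⟩

/-- node_n(k) lies in the interior of the quadrant T_{q_1}(Q) given by its
leading base-4 digit; consecutive nodes lie in distinct quadrants exactly when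
4^{n−1} ∣ k+1, i.e. exactly when k has digits (q,3,…,3) and k+1 has digits (q+1,0,…,0). -/
theorem node_in_quadrant_interior (n : ℕ) (hn : 1 ≤ n) (k : ℕ) (hk : k < 4 ^ n) :
    node n k ∈ interior (T (hdigit n k 0) '' Q) ∧
    (k + 1 < 4 ^ n →
      ((hdigit n k 0 ≠ hdigit n (k + 1) 0) ↔ 4 ^ (n - 1) ∣ (k + 1)) ∧
      ((4 ^ (n - 1) ∣ (k + 1)) ↔ ∃ q : ℕ, q ≤ 2 ∧
        (∀ j : ℕ, j < n → (hdigit n k j : ℕ) = if j = 0 then q else 3) ∧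
        (∀ j : ℕ, j < n → (hdigit n (k + 1) j : ℕ) = if j = 0 then q + 1 else 0))) := by
  constructor
  · have h : nodeAux (n - 1) (hdigit n k) ∈ Sq (hdigit n k 0) := nodeAux_mem (n - 1) (hdigit n k)
    exact interior_maximal (Sq_subset_image _) (isOpen_Sq _) h
  · intro hk1
    refine ⟨claim1 n k hk hk1, ?_, ?_⟩
    · exact claim2_fwd n k hn hk1
    · rintro ⟨q, _, _, h2⟩
      exact claim2_bwd n k q hn h2

end
end

section
/- Explicit formulas for the nodes neighbouring an exiting corner node: let n ≥ 2, q ∈ {0,1,2}, and k = (q+1)·4^{n−1} − 1 (so k has base-4 digits (q,3,…,3), k+1 has digits (q+1,0,…,0), and k−1 has digits (q,3,…,3,2)). Then node_n(k+1) = (1/2)·h_{q+1} + 2^{1−n}·H_{q+1}·F_0 and node_n(k−1) = (1/2)·h_q + (1/2)·H_q·(1,0) + 2^{1−n}·H_q·v_n, where v_n = (−1/4, 3/4) if n is even and v_n = (−3/4, 1/4) if n is odd. -/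
open Matrix

noncomputable section

/-! ### Auxiliary lemmas -/

lemma T0_apply (x y : ℝ) : T 0 (pt x y) = pt (y/2) (x/2) := by
  ext i; fin_cases i <;>
    simp [T, pt, toE, Hm, hv, Matrix.mulVec, dotProduct, Fin.sum_univ_two] <;> ring

lemma T3_apply (x y : ℝ) : T 3 (pt x y) = pt (1 - y/2) (1/2 - x/2) := by
  ext i; fin_cases i <;>
    simp [T, pt, toE, Hm, hv, Matrix.mulVec, dotProduct, Fin.sum_univ_two] <;> ring

lemma nodeAux_zeros (m : ℕ) (d : ℕ → Fin 4) (h : ∀ j ≤ m, d j = 0) :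
    nodeAux m d = pt ((1/2:ℝ)^m/4) ((1/2:ℝ)^m/4) := by
  induction m generalizing d with
  | zero => rw [nodeAux, h 0 le_rfl]; norm_num [Fv, pt]
  | succ m ih =>
    rw [nodeAux, h 0 (by omega), ih _ (fun j hj => h (j+1) (by omega)), T0_apply]
    congr 1 <;> ring

lemma nodeAux_threes (m : ℕ) (d : ℕ → Fin 4) (h3 : ∀ j < m, d j = 3) (h2 : d m = 2) :
    nodeAux m d = if Even m then pt (1 - (1/2:ℝ)^m/4) (3*(1/2:ℝ)^m/4)
      else pt (1 - 3*(1/2:ℝ)^m/4) ((1/2:ℝ)^m/4) := by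
  induction m generalizing d with
  | zero => rw [nodeAux, h2]; norm_num [Fv, pt]
  | succ m ih =>
    rw [nodeAux, h3 0 (by omega),
      ih _ (fun j hj => h3 (j+1) (by omega)) h2]
    rcases Nat.even_or_odd m with he | ho
    · rw [if_pos he, if_neg (by simp [Nat.even_add_one, he]), T3_apply]
      congr 1 <;> ring
    · rw [if_neg (Nat.not_even_iff_odd.mpr ho),
        if_pos (Nat.even_add_one.mpr (Nat.not_even_iff_odd.mpr ho)), T3_apply]
      congr 1 <;> ring

lemma div_pow_sub (a e : ℕ) (ha : 1 ≤ a) (he : 1 ≤ e) :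
    (a * 4 ^ e - 2) / 4 ^ e = a - 1 := by
  have hP : 2 ≤ 4 ^ e := by
    calc 2 ≤ 4 ^ 1 := by norm_num
    _ ≤ 4 ^ e := Nat.pow_le_pow_right (by norm_num) he
  apply Nat.div_eq_of_lt_le
  · rw [Nat.sub_mul, one_mul]
    exact Nat.sub_le_sub_left hP _
  · have h2 : (a - 1 + 1) * 4 ^ e = a * 4 ^ e := by
      congr 1; omega
    rw [h2]
    have h3 : 4 ^ e ≤ a * 4 ^ e := Nat.le_mul_of_pos_left _ ha
    omega

lemma digit_succ_zero (n q : ℕ) (hQ : q < 4) :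
    (hdigit n (q * 4 ^ (n - 1)) 0).val = q := by
  simp only [hdigit, Nat.sub_zero]
  rw [Nat.mul_div_cancel _ (pow_pos (by norm_num) _)]
  exact Nat.mod_eq_of_lt hQ

lemma digit_succ_rest (n q j : ℕ) (hj : j + 1 ≤ n - 1) :
    hdigit n (q * 4 ^ (n - 1)) (j + 1) = 0 := by
  apply Fin.ext
  simp only [hdigit]
  set e := n - 1 - (j + 1) with he
  have h1 : n - 1 = (j + 1) + e := by omega
  rw [h1, pow_add, ← mul_assoc, Nat.mul_div_cancel _ (pow_pos (by norm_num) _)]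
  show q * 4 ^ (j + 1) % 4 = 0
  rw [pow_succ, ← mul_assoc]
  simp [Nat.mul_mod_left]

lemma digit_pred_div (n q j : ℕ) (hQ : 1 ≤ q) (hj : j ≤ n - 2) (hn : 2 ≤ n) :
    (q * 4 ^ (n - 1) - 2) / 4 ^ (n - 1 - j) = q * 4 ^ j - 1 := by
  have hk : q * 4 ^ (n - 1) - 2 = q * 4 ^ j * 4 ^ (n - 1 - j) - 2 := by
    rw [mul_assoc, ← pow_add]
    congr 3
    omega
  rw [hk]
  exact div_pow_sub (q * 4 ^ j) (n - 1 - j) (Nat.mul_pos hQ (pow_pos (by norm_num) _)) (by omega)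

lemma digit_pred_zero (n q : ℕ) (hQ : 1 ≤ q) (hQ4 : q < 4) (hn : 2 ≤ n) :
    (hdigit n (q * 4 ^ (n - 1) - 2) 0).val = q - 1 := by
  simp only [hdigit, Nat.sub_zero]
  have h := digit_pred_div n q 0 hQ (by omega) hn
  simp only [Nat.sub_zero, pow_zero, mul_one] at h
  rw [h]
  omega

lemma digit_pred_mid (n q j : ℕ) (hQ : 1 ≤ q) (hj : j + 1 ≤ n - 2) (hn : 2 ≤ n) :
    hdigit n (q * 4 ^ (n - 1) - 2) (j + 1) = 3 := by
  apply Fin.ext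
  simp only [hdigit]
  rw [digit_pred_div n q (j+1) hQ hj hn]
  have h : q * 4 ^ (j + 1) = 4 * (q * 4 ^ j) := by ring
  rw [h]
  have h2 : 1 ≤ q * 4 ^ j := Nat.mul_pos hQ (pow_pos (by norm_num) _)
  show (4 * (q * 4 ^ j) - 1) % 4 = (3 : Fin 4).val
  omega

lemma digit_pred_last (n q : ℕ) (hQ : 1 ≤ q) (hn : 2 ≤ n) :
    hdigit n (q * 4 ^ (n - 1) - 2) (n - 1) = 2 := by
  apply Fin.ext
  simp only [hdigit, Nat.sub_self, pow_zero, Nat.div_one]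
  have h1 : n - 1 = (n - 2) + 1 := by omega
  rw [h1, pow_succ]
  have h2 : 1 ≤ q * 4 ^ (n - 2) := Nat.mul_pos hQ (pow_pos (by norm_num) _)
  show (q * (4 ^ (n-2) * 4) - 2) % 4 = (2 : Fin 4).val
  rw [← mul_assoc]
  omega

lemma two_zpow_aux (m : ℕ) : (2:ℝ) ^ ((1:ℤ) - ((m + 2 : ℕ) : ℤ)) = (1/2:ℝ)^m / 2 := by
  have h1 : ((1:ℤ) - ((m + 2 : ℕ) : ℤ)) = -((m + 1 : ℕ) : ℤ) := by push_cast; ring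
  rw [h1, _root_.zpow_neg, zpow_natCast, one_div, inv_pow, pow_succ, mul_inv, div_eq_mul_inv]

lemma two_zpow_aux' (m : ℕ) : (2:ℝ) ^ ((1:ℤ) - ((m : ℤ) + 2)) = ((2:ℝ)^m)⁻¹ / 2 := by
  have h1 : ((1:ℤ) - ((m : ℤ) + 2)) = -((m + 1 : ℕ) : ℤ) := by push_cast; ring
  rw [h1, _root_.zpow_neg, zpow_natCast, pow_succ, mul_inv, div_eq_mul_inv]

/-- explicit formulas for the nodes neighbouring the exiting corner node
k = (q+1)·4^{n−1} − 1. -/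
theorem neighbours_of_exiting_corner (n : ℕ) (hn : 2 ≤ n) (q : Fin 4) (hq : (q : ℕ) ≤ 2)
    (k : ℕ) (hk : k = ((q : ℕ) + 1) * 4 ^ (n - 1) - 1) :
    node n (k + 1) =
      (1/2 : ℝ) • hv (q + 1) + (2:ℝ) ^ ((1:ℤ) - n) • toE ((Hm (q + 1)).mulVec (Fv 0)) ∧
    node n (k - 1) =
      (1/2 : ℝ) • hv q + (1/2 : ℝ) • toE ((Hm q).mulVec ![1, 0]) +
      (2:ℝ) ^ ((1:ℤ) - n) • toE ((Hm q).mulVec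
        (if Even n then ![-(1/4), 3/4] else ![-(3/4), 1/4])) := by
  subst hk
  obtain ⟨m, rfl⟩ : ∃ m, n = m + 2 := ⟨n - 2, by omega⟩
  have hml : m + 2 - 1 = m + 1 := rfl
  have hpos : 1 ≤ ((q : ℕ) + 1) * 4 ^ (m + 1) :=
    Nat.mul_pos (by omega) (pow_pos (by norm_num) _)
  have hk1 : ((q : ℕ) + 1) * 4 ^ (m + 2 - 1) - 1 + 1 = ((q : ℕ) + 1) * 4 ^ (m + 2 - 1) := by
    rw [hml]; omega
  have hk2 : ((q : ℕ) + 1) * 4 ^ (m + 2 - 1) - 1 - 1 = ((q : ℕ) + 1) * 4 ^ (m + 2 - 1) - 2 := by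
    omega
  have hq1v : ((q + 1 : Fin 4) : ℕ) = (q : ℕ) + 1 := by
    rw [Fin.val_add]
    show ((q : ℕ) + 1) % 4 = (q : ℕ) + 1
    exact Nat.mod_eq_of_lt (by omega)
  have hzp := two_zpow_aux m
  have hzp' := two_zpow_aux' m
  constructor
  · -- node at k+1
    rw [hk1]
    show nodeAux (m + 1) (hdigit (m+2) (((q : ℕ) + 1) * 4 ^ (m + 2 - 1))) = _
    rw [nodeAux]
    have d0 : hdigit (m+2) (((q : ℕ) + 1) * 4 ^ (m + 2 - 1)) 0 = q + 1 :=
      Fin.ext (by rw [digit_succ_zero (m+2) ((q:ℕ)+1) (by omega), hq1v])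
    rw [d0, nodeAux_zeros m _ (fun j hj => digit_succ_rest (m+2) ((q:ℕ)+1) j (by omega))]
    fin_cases q
    · ext i; fin_cases i <;>
        (simp [T, pt, toE, Hm, hv, Fv, Matrix.mulVec, dotProduct, Fin.sum_univ_two];
          rw [hzp']; ring)
    · ext i; fin_cases i <;>
        (simp [T, pt, toE, Hm, hv, Fv, Matrix.mulVec, dotProduct, Fin.sum_univ_two];
          rw [hzp']; ring)
    · ext i; fin_cases i <;>
        (simp [T, pt, toE, Hm, hv, Fv, Matrix.mulVec, dotProduct, Fin.sum_univ_two];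
          rw [hzp']; ring)
    · simp at hq
  · -- node at k-1
    rw [hk2]
    show nodeAux (m + 1) (hdigit (m+2) (((q : ℕ) + 1) * 4 ^ (m + 2 - 1) - 2)) = _
    rw [nodeAux]
    have d0 : hdigit (m+2) (((q : ℕ) + 1) * 4 ^ (m + 2 - 1) - 2) 0 = q := by
      apply Fin.ext
      rw [digit_pred_zero (m+2) ((q:ℕ)+1) (by omega) (by omega) (by omega)]
      omega
    have dlast : hdigit (m+2) (((q : ℕ) + 1) * 4 ^ (m + 2 - 1) - 2) (m + 1) = 2 := by
      have := digit_pred_last (m+2) ((q:ℕ)+1) (by omega) (by omega)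
      rwa [hml] at this
    rw [d0, nodeAux_threes m _
      (fun j hj => digit_pred_mid (m+2) ((q:ℕ)+1) j (by omega) (by omega) (by omega)) dlast]
    have hpar : Even (m + 2) ↔ Even m := by simp [Nat.even_add_one, Nat.even_add]
    rcases Nat.even_or_odd m with he | ho
    · rw [if_pos he, if_pos (hpar.mpr he)]
      fin_cases q
      · ext i; fin_cases i <;>
          (simp [T, pt, toE, Hm, hv, Matrix.mulVec, dotProduct, Fin.sum_univ_two];
            rw [hzp']; ring)
      · ext i; fin_cases i <;>
          (simp [T, pt, toE, Hm, hv, Matrix.mulVec, dotProduct, Fin.sum_univ_two];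
            rw [hzp']; ring)
      · ext i; fin_cases i <;>
          (simp [T, pt, toE, Hm, hv, Matrix.mulVec, dotProduct, Fin.sum_univ_two];
            rw [hzp']; ring)
      · simp at hq
    · have ho' := Nat.not_even_iff_odd.mpr ho
      rw [if_neg ho', if_neg (fun h => ho' (hpar.mp h))]
      fin_cases q
      · ext i; fin_cases i <;>
          (simp [T, pt, toE, Hm, hv, Matrix.mulVec, dotProduct, Fin.sum_univ_two];
            rw [hzp']; ring)
      · ext i; fin_cases i <;>
          (simp [T, pt, toE, Hm, hv, Matrix.mulVec, dotProduct, Fin.sum_univ_two];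
            rw [hzp']; ring)
      · ext i; fin_cases i <;>
          (simp [T, pt, toE, Hm, hv, Matrix.mulVec, dotProduct, Fin.sum_univ_two];
            rw [hzp']; ring)
      · simp at hq

end
end

section
/- (Theorem 1, general form) The displacement across any first-level corner node depends only on the corner type, the quadrant index, and the parity of the order: there exist functions C : {0,1}×{1,2,3} → ℝ² and D : {0,1}×{1,2,3}×{0,1} → ℝ², independent of n, such that for every n ≥ 2 and q ∈ {1,2,3}: if k = q·4^{n−1} − 1 (exiting corner node, type b = 0) or k = q·4^{n−1} (entering corner node, type b = 1), then node_n(k+1) − node_n(k−1) = C(b, q) + 2^{1−n}·D(b, q, n mod 2). -/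
open Matrix

noncomputable section

lemma T0_pt (a b : ℝ) : T 0 (pt a b) = pt (b/2) (a/2) := by
  ext i
  fin_cases i <;>
    simp [T, pt, toE, Hm, hv, Matrix.mulVec, dotProduct] <;> ring

lemma T1_pt (a b : ℝ) : T 1 (pt a b) = pt (a/2) (b/2 + 1/2) := by
  ext i
  fin_cases i <;>
    simp [T, pt, toE, Hm, hv, Matrix.mulVec, dotProduct] <;> ring

lemma T2_pt (a b : ℝ) : T 2 (pt a b) = pt (a/2 + 1/2) (b/2 + 1/2) := by
  ext i
  fin_cases i <;>
    simp [T, pt, toE, Hm, hv, Matrix.mulVec, dotProduct] <;> ring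

lemma T3_pt (a b : ℝ) : T 3 (pt a b) = pt (1 - b/2) (1/2 - a/2) := by
  ext i
  fin_cases i <;>
    simp [T, pt, toE, Hm, hv, Matrix.mulVec, dotProduct] <;> ring

lemma pt_congr {a b c d : ℝ} (h1 : a = c) (h2 : b = d) : pt a b = pt c d := by rw [h1, h2]

lemma hdigit_shift (n k j : ℕ) (hn : 1 ≤ n) :
    hdigit (n + 1) k (j + 1) = hdigit n (k % 4 ^ n) j := by
  have he : (n + 1) - 1 - (j + 1) = n - 1 - j := by omega
  set e := n - 1 - j with hedef
  have hen : e < n := by omega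
  apply Fin.ext
  show k / 4 ^ ((n+1) - 1 - (j+1)) % 4 = (k % 4 ^ n) / 4 ^ e % 4
  rw [he]
  conv_lhs => rw [← Nat.div_add_mod k (4 ^ n)]
  have h4 : (4:ℕ) ^ n = 4 ^ e * 4 ^ (n - e) := by rw [← pow_add]; congr 1; omega
  rw [h4, mul_assoc, Nat.mul_add_div (by positivity)]
  have h5 : (4:ℕ) ^ (n - e) = 4 * 4 ^ (n - e - 1) := by
    rw [← pow_succ']; congr 1; omega
  rw [h5, mul_assoc, Nat.mul_add_mod]

lemma node_succ (n k : ℕ) (hn : 1 ≤ n) :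
    node (n + 1) k = T ⟨k / 4 ^ n % 4, Nat.mod_lt _ (by norm_num)⟩ (node n (k % 4 ^ n)) := by
  obtain ⟨m, rfl⟩ : ∃ m, n = m + 1 := ⟨n - 1, by omega⟩
  show nodeAux (m + 1) (hdigit (m + 2) k) = _
  rw [nodeAux]
  have h0 : hdigit (m + 2) k 0 = ⟨k / 4 ^ (m+1) % 4, Nat.mod_lt _ (by norm_num)⟩ := by
    apply Fin.ext; rfl
  rw [h0]
  have hfun : (fun j => hdigit (m + 2) k (j + 1)) = hdigit (m + 1) (k % 4 ^ (m + 1)) := by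
    funext j; exact hdigit_shift (m + 1) k j (by omega)
  show _ = T _ (nodeAux m (hdigit (m + 1) (k % 4 ^ (m + 1))))
  rw [hfun]

lemma node_zero (n : ℕ) (hn : 1 ≤ n) :
    node n 0 = pt ((1/2:ℝ)^(n-1)/4) ((1/2:ℝ)^(n-1)/4) := by
  induction n with
  | zero => omega
  | succ m ih =>
    rcases Nat.eq_or_lt_of_le hn with h | h
    · simp only [← h]
      show nodeAux 0 (hdigit 1 0) = _
      have : hdigit 1 0 0 = 0 := by apply Fin.ext; rfl
      rw [nodeAux, this]
      norm_num [Fv]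
    · have hm : 1 ≤ m := by omega
      rw [node_succ m 0 hm]
      have : (⟨0 / 4 ^ m % 4, Nat.mod_lt _ (by norm_num)⟩ : Fin 4) = 0 := by
        apply Fin.ext; simp
      rw [Nat.zero_mod, this, ih hm, T0_pt]
      have : m + 1 - 1 = (m - 1) + 1 := by omega
      rw [this, pow_succ]
      ring_nf

lemma node_one (n : ℕ) (hn : 1 ≤ n) :
    node n 1 = if (n-1) % 2 = 0 then pt ((1/2:ℝ)^(n-1)/4) (3*(1/2:ℝ)^(n-1)/4)
               else pt (3*(1/2:ℝ)^(n-1)/4) ((1/2:ℝ)^(n-1)/4) := by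
  induction n with
  | zero => omega
  | succ m ih =>
    rcases Nat.eq_or_lt_of_le hn with h | h
    · simp only [← h]
      show nodeAux 0 (hdigit 1 1) = _
      have : hdigit 1 1 0 = 1 := by apply Fin.ext; rfl
      rw [nodeAux, this]
      norm_num [Fv]
    · have hm : 1 ≤ m := by omega
      rw [node_succ m 1 hm]
      have hlt : 1 < 4 ^ m := by
        calc (1:ℕ) < 4 ^ 1 := by norm_num
        _ ≤ 4 ^ m := Nat.pow_le_pow_right (by norm_num) hm
      have h1 : (1 : ℕ) % 4 ^ m = 1 := Nat.mod_eq_of_lt hlt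
      have h2 : (⟨1 / 4 ^ m % 4, Nat.mod_lt _ (by norm_num)⟩ : Fin 4) = 0 := by
        apply Fin.ext
        simp [Nat.div_eq_of_lt hlt]
      rw [h1, h2, ih hm]
      have hms : m + 1 - 1 = (m - 1) + 1 := by omega
      have hpar : (m + 1 - 1) % 2 = ((m - 1) + 1) % 2 := by rw [hms]
      by_cases hp : (m - 1) % 2 = 0
      · have : (m + 1 - 1) % 2 = 1 := by omega
        rw [if_pos hp, this, T0_pt]
        norm_num [hms, pow_succ]
        ring_nf
      · have : (m + 1 - 1) % 2 = 0 := by omega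
        rw [if_neg hp, this, T0_pt]
        norm_num [hms, pow_succ]
        ring_nf

lemma node_pred (n : ℕ) (hn : 1 ≤ n) :
    node n (4 ^ n - 1) = pt (1 - (1/2:ℝ)^(n-1)/4) ((1/2:ℝ)^(n-1)/4) := by
  induction n with
  | zero => omega
  | succ m ih =>
    rcases Nat.eq_or_lt_of_le hn with h | h
    · simp only [← h]
      show nodeAux 0 (hdigit 1 3) = _
      have : hdigit 1 3 0 = 3 := by apply Fin.ext; rfl
      rw [nodeAux, this]
      norm_num [Fv, pt]
    · have hm : 1 ≤ m := by omega
      have hpow : (4:ℕ) ^ m ≥ 4 := by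
        calc (4:ℕ)^m ≥ 4^1 := Nat.pow_le_pow_right (by norm_num) hm
        _ = 4 := by norm_num
      have hsplit : 4 ^ (m+1) - 1 = 4 ^ m * 3 + (4 ^ m - 1) := by
        have : 4 ^ (m+1) = 4 * 4 ^ m := by rw [pow_succ]; ring
        omega
      rw [node_succ m _ hm]
      have hdiv : (4 ^ (m+1) - 1) / 4 ^ m % 4 = 3 := by
        rw [hsplit, Nat.mul_add_div (by positivity), Nat.div_eq_of_lt (by omega)]
      have hmod : (4 ^ (m+1) - 1) % 4 ^ m = 4 ^ m - 1 := by
        rw [hsplit, Nat.mul_add_mod, Nat.mod_eq_of_lt (by omega)]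
      have h3 : (⟨(4 ^ (m+1) - 1) / 4 ^ m % 4, Nat.mod_lt _ (by norm_num)⟩ : Fin 4) = 3 := by
        apply Fin.ext; exact hdiv
      rw [hmod, h3, ih hm, T3_pt]
      have hms : m + 1 - 1 = (m - 1) + 1 := by omega
      simp only [hms, pow_succ]
      exact pt_congr (by ring) (by ring)

lemma node_pred2 (n : ℕ) (hn : 1 ≤ n) :
    node n (4 ^ n - 2) = if (n-1) % 2 = 0 then pt (1 - (1/2:ℝ)^(n-1)/4) (3*(1/2:ℝ)^(n-1)/4)
                         else pt (1 - 3*(1/2:ℝ)^(n-1)/4) ((1/2:ℝ)^(n-1)/4) := by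
  induction n with
  | zero => omega
  | succ m ih =>
    rcases Nat.eq_or_lt_of_le hn with h | h
    · simp only [← h]
      show nodeAux 0 (hdigit 1 2) = _
      have : hdigit 1 2 0 = 2 := by apply Fin.ext; rfl
      rw [nodeAux, this]
      norm_num [Fv, pt]
    · have hm : 1 ≤ m := by omega
      have hpow : (4:ℕ) ^ m ≥ 4 := by
        calc (4:ℕ)^m ≥ 4^1 := Nat.pow_le_pow_right (by norm_num) hm
        _ = 4 := by norm_num
      have hsplit : 4 ^ (m+1) - 2 = 4 ^ m * 3 + (4 ^ m - 2) := by
        have : 4 ^ (m+1) = 4 * 4 ^ m := by rw [pow_succ]; ring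
        omega
      rw [node_succ m _ hm]
      have hdiv : (4 ^ (m+1) - 2) / 4 ^ m % 4 = 3 := by
        rw [hsplit, Nat.mul_add_div (by positivity), Nat.div_eq_of_lt (by omega)]
      have hmod : (4 ^ (m+1) - 2) % 4 ^ m = 4 ^ m - 2 := by
        rw [hsplit, Nat.mul_add_mod, Nat.mod_eq_of_lt (by omega)]
      have h3 : (⟨(4 ^ (m+1) - 2) / 4 ^ m % 4, Nat.mod_lt _ (by norm_num)⟩ : Fin 4) = 3 := by
        apply Fin.ext; exact hdiv
      rw [hmod, h3, ih hm]
      have hms : m + 1 - 1 = (m - 1) + 1 := by omega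
      by_cases hp : (m - 1) % 2 = 0
      · rw [if_pos hp, T3_pt]
        rw [if_neg (show ¬((m + 1 - 1) % 2 = 0) by omega)]
        simp only [hms, pow_succ]
        exact pt_congr (by ring) (by ring)
      · rw [if_neg hp, T3_pt]
        rw [if_pos (show (m + 1 - 1) % 2 = 0 by omega)]
        simp only [hms, pow_succ]
        exact pt_congr (by ring) (by ring)

def Dfun : Bool → Fin 4 → ℕ → E2 := fun b q p =>
  if b then
    if q = 1 then (if p = 0 then pt 0 1 else pt (1/2) (1/2))
    else if q = 2 then (if p = 0 then pt (1/2) (1/2) else pt 1 0)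
    else (if p = 0 then pt (-(1/2)) (-(1/2)) else pt 0 (-1))
  else
    if q = 1 then (if p = 0 then pt (-(1/2)) (1/2) else pt 0 1)
    else if q = 2 then (if p = 0 then pt (1/2) (-(1/2)) else pt 1 0)
    else (if p = 0 then pt 0 (-1) else pt (1/2) (-(1/2)))

lemma pt_sub (a b c d : ℝ) : pt a b - pt c d = pt (a-c) (b-d) := by
  ext i; fin_cases i <;> simp [pt]

lemma pt_add (a b c d : ℝ) : pt a b + pt c d = pt (a+c) (b+d) := by
  ext i; fin_cases i <;> simp [pt]

lemma pt_smul (r a b : ℝ) : r • pt a b = pt (r*a) (r*b) := by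
  ext i; fin_cases i <;> simp [pt]


/-- Theorem 1, general form: the displacement across any first-level
corner node is C(b,q) + 2^{1−n}·D(b,q,n mod 2), with C, D independent of n
(b = false for the exiting corner k = q·4^{n−1} − 1, b = true for the entering
corner k = q·4^{n−1}). -/
theorem corner_displacement_canonical :
    ∃ C : Bool → Fin 4 → E2, ∃ D : Bool → Fin 4 → ℕ → E2,
      ∀ n : ℕ, 2 ≤ n → ∀ q : Fin 4, 1 ≤ (q : ℕ) → (q : ℕ) ≤ 3 →
        (node n ((q : ℕ) * 4 ^ (n - 1) - 1 + 1) - node n ((q : ℕ) * 4 ^ (n - 1) - 1 - 1) =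
          C false q + (2:ℝ) ^ ((1:ℤ) - n) • D false q (n % 2)) ∧
        (node n ((q : ℕ) * 4 ^ (n - 1) + 1) - node n ((q : ℕ) * 4 ^ (n - 1) - 1) =
          C true q + (2:ℝ) ^ ((1:ℤ) - n) • D true q (n % 2)) := by
  refine ⟨fun _ _ => pt 0 0, Dfun, ?_⟩
  intro n hn q hq1 hq3
  obtain ⟨m, rfl⟩ : ∃ m, n = m + 2 := ⟨n - 2, by omega⟩
  have hp1 : m + 2 - 1 = m + 1 := rfl
  have hP : (4:ℕ) ≤ 4 ^ (m + 1) := by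
    calc (4:ℕ) = 4 ^ 1 := by norm_num
    _ ≤ 4 ^ (m + 1) := Nat.pow_le_pow_right (by norm_num) (by omega)
  have hPpos : 0 < 4 ^ (m + 1) := by omega
  have hz : (2:ℝ) ^ ((1:ℤ) - (m + 2 : ℕ)) = (1/2:ℝ) ^ (m + 1) := by
    have h1 : ((1:ℤ) - (m + 2 : ℕ)) = -((m : ℤ) + 1) := by push_cast; ring
    rw [h1, _root_.zpow_neg, one_div, inv_pow]
    rw [show ((m:ℤ)+1) = ((m+1:ℕ):ℤ) by push_cast; ring, zpow_natCast]
  have hq : (q:ℕ) = 1 ∨ (q:ℕ) = 2 ∨ (q:ℕ) = 3 := by omega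
  -- generic node rewrites
  have key : ∀ (a : Fin 4) (r : ℕ), r < 4 ^ (m+1) →
      node (m+2) (4 ^ (m+1) * (a:ℕ) + r) = T a (node (m+1) r) := by
    intro a r hr
    rw [node_succ (m+1) _ (by omega)]
    have h1 : (4 ^ (m+1) * (a:ℕ) + r) % 4 ^ (m+1) = r := by
      rw [Nat.mul_add_mod, Nat.mod_eq_of_lt hr]
    have h2 : ((4 ^ (m+1) * (a:ℕ) + r) / 4 ^ (m+1)) % 4 = (a:ℕ) := by
      rw [Nat.mul_add_div hPpos, Nat.div_eq_of_lt hr]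
      simp [Nat.mod_eq_of_lt a.isLt]
    have h3 : (⟨(4 ^ (m+1) * (a:ℕ) + r) / 4 ^ (m+1) % 4, Nat.mod_lt _ (by norm_num)⟩ : Fin 4) = a := by
      apply Fin.ext; exact h2
    rw [h1, h3]
  have hmod2 : (m + 2) % 2 = m % 2 := by omega
  have hm1 : m + 1 - 1 = m := rfl
  have hnz : node (m+1) 0 = _ := node_zero (m+1) (by omega)
  have hno : node (m+1) 1 = _ := node_one (m+1) (by omega)
  have hnp : node (m+1) (4^(m+1) - 1) = _ := node_pred (m+1) (by omega)
  have hnp2 : node (m+1) (4^(m+1) - 2) = _ := node_pred2 (m+1) (by omega)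
  rw [hm1] at hnz hno hnp hnp2
  rcases hq with hQ | hQ | hQ
  · -- q = 1
    simp only [hQ, hp1]
    have e1 : 1 * 4 ^ (m+1) - 1 + 1 = 4 ^ (m+1) * ((1 : Fin 4):ℕ) + 0 := by
      rw [show ((1 : Fin 4):ℕ) = 1 from rfl]; omega
    have e2 : 1 * 4 ^ (m+1) - 1 - 1 = 4 ^ (m+1) * ((0 : Fin 4):ℕ) + (4^(m+1) - 2) := by
      rw [show ((0 : Fin 4):ℕ) = 0 from rfl]; omega
    have e3 : 1 * 4 ^ (m+1) + 1 = 4 ^ (m+1) * ((1 : Fin 4):ℕ) + 1 := by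
      rw [show ((1 : Fin 4):ℕ) = 1 from rfl]; omega
    have e4 : 1 * 4 ^ (m+1) - 1 = 4 ^ (m+1) * ((0 : Fin 4):ℕ) + (4^(m+1) - 1) := by
      rw [show ((0 : Fin 4):ℕ) = 0 from rfl]; omega
    rw [e1, e2, e3, e4, key 1 0 (by omega), key 0 _ (by omega), key 1 1 (by omega),
       key 0 _ (by omega), hnz, hno, hnp, hnp2]
    have hqe : q = 1 := by apply Fin.ext; rw [hQ]; rfl
    rw [hqe, hmod2, hz]
    have hDc : m % 2 = 0 ∨ m % 2 = 1 := by omega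
    constructor <;> rcases hDc with hm2 | hm2 <;> rw [hm2] <;>
      norm_num [show Dfun false 1 0 = pt (-(1/2)) (1/2) from rfl,
                show Dfun false 1 1 = pt 0 1 from rfl,
                show Dfun true 1 0 = pt 0 1 from rfl,
                show Dfun true 1 1 = pt (1/2) (1/2) from rfl,
                T1_pt, T0_pt, pt_smul, pt_sub, pt_add] <;>
      exact pt_congr (by ring) (by ring)
  · -- q = 2
    simp only [hQ, hp1]
    have e1 : 2 * 4 ^ (m+1) - 1 + 1 = 4 ^ (m+1) * ((2 : Fin 4):ℕ) + 0 := by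
      rw [show ((2 : Fin 4):ℕ) = 2 from rfl]; omega
    have e2 : 2 * 4 ^ (m+1) - 1 - 1 = 4 ^ (m+1) * ((1 : Fin 4):ℕ) + (4^(m+1) - 2) := by
      rw [show ((1 : Fin 4):ℕ) = 1 from rfl]; omega
    have e3 : 2 * 4 ^ (m+1) + 1 = 4 ^ (m+1) * ((2 : Fin 4):ℕ) + 1 := by
      rw [show ((2 : Fin 4):ℕ) = 2 from rfl]; omega
    have e4 : 2 * 4 ^ (m+1) - 1 = 4 ^ (m+1) * ((1 : Fin 4):ℕ) + (4^(m+1) - 1) := by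
      rw [show ((1 : Fin 4):ℕ) = 1 from rfl]; omega
    rw [e1, e2, e3, e4, key 2 0 (by omega), key 1 _ (by omega), key 2 1 (by omega),
       key 1 _ (by omega), hnz, hno, hnp, hnp2]
    have hqe : q = 2 := by apply Fin.ext; rw [hQ]; rfl
    rw [hqe, hmod2, hz]
    have hDc : m % 2 = 0 ∨ m % 2 = 1 := by omega
    constructor <;> rcases hDc with hm2 | hm2 <;> rw [hm2] <;>
      norm_num [show Dfun false 2 0 = pt (1/2) (-(1/2)) from rfl,
                show Dfun false 2 1 = pt 1 0 from rfl,
                show Dfun true 2 0 = pt (1/2) (1/2) from rfl,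
                show Dfun true 2 1 = pt 1 0 from rfl,
                T2_pt, T1_pt, pt_smul, pt_sub, pt_add] <;>
      exact pt_congr (by ring) (by ring)
  · -- q = 3
    simp only [hQ, hp1]
    have e1 : 3 * 4 ^ (m+1) - 1 + 1 = 4 ^ (m+1) * ((3 : Fin 4):ℕ) + 0 := by
      rw [show ((3 : Fin 4):ℕ) = 3 from rfl]; omega
    have e2 : 3 * 4 ^ (m+1) - 1 - 1 = 4 ^ (m+1) * ((2 : Fin 4):ℕ) + (4^(m+1) - 2) := by
      rw [show ((2 : Fin 4):ℕ) = 2 from rfl]; omega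
    have e3 : 3 * 4 ^ (m+1) + 1 = 4 ^ (m+1) * ((3 : Fin 4):ℕ) + 1 := by
      rw [show ((3 : Fin 4):ℕ) = 3 from rfl]; omega
    have e4 : 3 * 4 ^ (m+1) - 1 = 4 ^ (m+1) * ((2 : Fin 4):ℕ) + (4^(m+1) - 1) := by
      rw [show ((2 : Fin 4):ℕ) = 2 from rfl]; omega
    rw [e1, e2, e3, e4, key 3 0 (by omega), key 2 _ (by omega), key 3 1 (by omega),
       key 2 _ (by omega), hnz, hno, hnp, hnp2]
    have hqe : q = 3 := by apply Fin.ext; rw [hQ]; rfl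
    rw [hqe, hmod2, hz]
    have hDc : m % 2 = 0 ∨ m % 2 = 1 := by omega
    constructor <;> rcases hDc with hm2 | hm2 <;> rw [hm2] <;>
      norm_num [show Dfun false 3 0 = pt 0 (-1) from rfl,
                show Dfun false 3 1 = pt (1/2) (-(1/2)) from rfl,
                show Dfun true 3 0 = pt (-(1/2)) (-(1/2)) from rfl,
                show Dfun true 3 1 = pt 0 (-1) from rfl,
                T3_pt, T2_pt, pt_smul, pt_sub, pt_add] <;>
      exact pt_congr (by ring) (by ring)

end
end
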